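/- Let z_1,...,z_m be pairwise distinct complex numbers and w a complex number distinct from all z_j. Then ∑_{j=1}^m [∏_{k≠j} (z - z_k)] / [(w - z_j) · ∏_{k≠j} (z_j - z_k)] = ∑_{j=1}^m [∏_{k=1}^{j-1} (z - z_k)] / [∏_{k=1}^{j} (w - z_k)] for every complex z. -/

import Mathlib

open Finset Polynomial

private lemma rhs_mul (m : ℕ) (zs : ℕ → ℂ) (w : ℂ)
    (hw : ∀ j ∈ Finset.Icc 1 m, w ≠ zs j) (z : ℂ) :
    (∑ j ∈ Finset.Icc 1 m,
      (∏ k ∈ Finset.Icc 1 (j - 1), (z - zs k)) / ∏ k ∈ Finset.Icc 1 j, (w - zs k)) * (w - z)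
      = 1 - (∏ k ∈ Finset.Icc 1 m, (z - zs k)) / (∏ k ∈ Finset.Icc 1 m, (w - zs k)) := by
  induction m with
  | zero => simp
  | succ n ih =>
    have hins : Finset.Icc 1 (n + 1) = insert (n + 1) (Finset.Icc 1 n) := by
      ext x; simp only [Finset.mem_Icc, Finset.mem_insert]; omega
    have hmem : (n + 1) ∉ Finset.Icc 1 n := by simp
    have hCn : (∏ k ∈ Finset.Icc 1 n, (w - zs k)) ≠ 0 := by
      apply Finset.prod_ne_zero_iff.mpr
      intro k hk
      exact sub_ne_zero_of_ne (hw k (by rw [hins]; exact Finset.mem_insert_of_mem hk))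
    have hwn : w - zs (n + 1) ≠ 0 :=
      sub_ne_zero_of_ne (hw (n + 1) (by simp))
    have ih' := ih (fun j hj => hw j (by rw [hins]; exact Finset.mem_insert_of_mem hj))
    simp only [hins, Finset.sum_insert hmem, Finset.prod_insert hmem, Nat.add_sub_cancel]
    rw [add_mul, ih']
    field_simp
    ring

private lemma lhs_mul (m : ℕ) (zs : ℕ → ℂ)
    (hzs : Set.InjOn zs (Finset.Icc 1 m : Set ℕ)) (w : ℂ)
    (hw : ∀ j ∈ Finset.Icc 1 m, w ≠ zs j) (z : ℂ) :
    (∑ j ∈ Finset.Icc 1 m,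
      (∏ k ∈ (Finset.Icc 1 m).erase j, (z - zs k)) /
        ((w - zs j) * ∏ k ∈ (Finset.Icc 1 m).erase j, (zs j - zs k))) * (w - z)
      = 1 - (∏ k ∈ Finset.Icc 1 m, (z - zs k)) / (∏ k ∈ Finset.Icc 1 m, (w - zs k)) := by
  set s : Finset ℕ := Finset.Icc 1 m with hs
  set d : ℕ → ℂ := fun j => (w - zs j) * ∏ k ∈ s.erase j, (zs j - zs k) with hd
  have hd0 : ∀ j ∈ s, d j ≠ 0 := by
    intro j hj
    apply mul_ne_zero (sub_ne_zero_of_ne (hw j hj))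
    apply Finset.prod_ne_zero_iff.mpr
    intro k hk
    have hkj : k ≠ j := Finset.ne_of_mem_erase hk
    exact sub_ne_zero_of_ne fun h =>
      hkj (hzs (Finset.mem_coe.mpr (Finset.mem_of_mem_erase hk)) (Finset.mem_coe.mpr hj) h.symm)
  have hC' : (∏ k ∈ s, (w - zs k)) ≠ 0 := by
    apply Finset.prod_ne_zero_iff.mpr
    intro k hk
    exact sub_ne_zero_of_ne (hw k hk)
  set v : ℕ → ℂ := fun i => if i = 0 then w else zs i with hv
  have hvinj : Set.InjOn v (Finset.Icc 0 m : Set ℕ) := by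
    intro i hi j hj hij
    simp only [Finset.coe_Icc, Set.mem_Icc] at hi hj
    by_cases hi0 : i = 0 <;> by_cases hj0 : j = 0
    · rw [hi0, hj0]
    · exact absurd (show w = zs j by simpa [hv, hi0, hj0] using hij)
        (hw j (Finset.mem_Icc.mpr ⟨Nat.one_le_iff_ne_zero.mpr hj0, hj.2⟩))
    · exact absurd (show zs i = w by simpa [hv, hi0, hj0] using hij).symm
        (hw i (Finset.mem_Icc.mpr ⟨Nat.one_le_iff_ne_zero.mpr hi0, hi.2⟩))
    · exact hzs (Finset.mem_coe.mpr (Finset.mem_Icc.mpr ⟨Nat.one_le_iff_ne_zero.mpr hi0, hi.2⟩))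
        (Finset.mem_coe.mpr (Finset.mem_Icc.mpr ⟨Nat.one_le_iff_ne_zero.mpr hj0, hj.2⟩))
        (by simpa [hv, hi0, hj0] using hij)
  set A : ℂ[X] := ∑ j ∈ s, Polynomial.C (d j)⁻¹ *
      ((Polynomial.C w - Polynomial.X) * ∏ k ∈ s.erase j, (Polynomial.X - Polynomial.C (zs k)))
    with hA
  set B : ℂ[X] := 1 - Polynomial.C (∏ k ∈ s, (w - zs k))⁻¹ *
      ∏ k ∈ s, (Polynomial.X - Polynomial.C (zs k)) with hB
  have hcard : (Finset.Icc 0 m).card = m + 1 := by simp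
  have hdeg_prod : ∀ t : Finset ℕ,
      (∏ k ∈ t, (Polynomial.X - Polynomial.C (zs k))).degree = (t.card : WithBot ℕ) := by
    intro t
    rw [Polynomial.degree_prod]
    simp [Polynomial.degree_X_sub_C]
  have hdegA : A.degree < ((Finset.Icc 0 m).card : ℕ) := by
    rw [hcard]
    apply lt_of_le_of_lt (Polynomial.degree_sum_le _ _)
    rw [Finset.sup_lt_iff (show (⊥ : WithBot ℕ) < ((m + 1 : ℕ) : WithBot ℕ) from by exact_mod_cast WithBot.bot_lt_coe (m + 1))]
    intro j hj
    have h1m : 1 ≤ m := le_trans (Finset.mem_Icc.mp hj).1 (Finset.mem_Icc.mp hj).2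
    have hL : (Polynomial.C w - Polynomial.X : ℂ[X]).degree = 1 := by
      have : (Polynomial.C w - Polynomial.X : ℂ[X]) = -(Polynomial.X - Polynomial.C w) := by ring
      rw [this, Polynomial.degree_neg, Polynomial.degree_X_sub_C]
    have hP : (∏ k ∈ s.erase j, (Polynomial.X - Polynomial.C (zs k))).degree
        = ((m - 1 : ℕ) : WithBot ℕ) := by
      rw [hdeg_prod, Finset.card_erase_of_mem hj, hs, Nat.card_Icc]
      exact congrArg _ (by omega)
    have hmul : ((Polynomial.C w - Polynomial.X) *
        ∏ k ∈ s.erase j, (Polynomial.X - Polynomial.C (zs k))).degree = (m : WithBot ℕ) := by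
      rw [Polynomial.degree_mul, hL, hP, ← Nat.cast_one, ← Nat.cast_add]
      congr 1
      omega
    calc (Polynomial.C (d j)⁻¹ * ((Polynomial.C w - Polynomial.X) *
            ∏ k ∈ s.erase j, (Polynomial.X - Polynomial.C (zs k)))).degree
        ≤ (Polynomial.C (d j)⁻¹).degree + (m : WithBot ℕ) := by
          rw [← hmul]; exact Polynomial.degree_mul_le _ _
      _ ≤ 0 + (m : WithBot ℕ) := add_le_add Polynomial.degree_C_le le_rfl
      _ = (m : WithBot ℕ) := zero_add _
      _ < ((m + 1 : ℕ) : WithBot ℕ) := by exact_mod_cast Nat.lt_succ_self m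
  have hdegB : B.degree < ((Finset.Icc 0 m).card : ℕ) := by
    rw [hcard, hB]
    apply lt_of_le_of_lt (Polynomial.degree_sub_le _ _)
    rw [max_lt_iff]
    constructor
    · calc (1 : ℂ[X]).degree = 0 := Polynomial.degree_one
        _ < ((m + 1 : ℕ) : WithBot ℕ) := by exact_mod_cast Nat.succ_pos m
    · calc (Polynomial.C (∏ k ∈ s, (w - zs k))⁻¹ *
            ∏ k ∈ s, (Polynomial.X - Polynomial.C (zs k))).degree
          ≤ (Polynomial.C (∏ k ∈ s, (w - zs k))⁻¹).degree
              + (∏ k ∈ s, (Polynomial.X - Polynomial.C (zs k))).degree :=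
            Polynomial.degree_mul_le _ _
        _ ≤ 0 + ((m : ℕ) : WithBot ℕ) := by
            apply add_le_add Polynomial.degree_C_le
            rw [hdeg_prod, hs, Nat.card_Icc]
            exact_mod_cast Nat.le_refl _
        _ = ((m : ℕ) : WithBot ℕ) := zero_add _
        _ < ((m + 1 : ℕ) : WithBot ℕ) := by exact_mod_cast Nat.lt_succ_self m
  have heval : ∀ i ∈ Finset.Icc 0 m, A.eval (v i) = B.eval (v i) := by
    intro i hi
    by_cases hi0 : i = 0
    · have hvw : v i = w := by simp [hv, hi0]
      rw [hvw, hA, hB]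
      simp [Polynomial.eval_finset_sum, Polynomial.eval_prod, inv_mul_cancel₀ hC']
    · have him : i ∈ s := by
        rw [hs]
        exact Finset.mem_Icc.mpr ⟨Nat.one_le_iff_ne_zero.mpr hi0, (Finset.mem_Icc.mp hi).2⟩
      have hvi : v i = zs i := by simp [hv, hi0]
      rw [hvi, hA, hB]
      simp only [Polynomial.eval_finset_sum, Polynomial.eval_mul, Polynomial.eval_sub,
        Polynomial.eval_one, Polynomial.eval_C, Polynomial.eval_X, Polynomial.eval_prod]
      rw [Finset.sum_eq_single_of_mem i him,
        show (∏ k ∈ s, (zs i - zs k)) = 0 from Finset.prod_eq_zero him (sub_self (zs i))]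
      · have : ((w - zs i) * ∏ k ∈ s.erase i, (zs i - zs k)) = d i := by rw [hd]
        rw [this, inv_mul_cancel₀ (hd0 i him)]
        ring
      · intro j hj hji
        rw [Finset.prod_eq_zero (Finset.mem_erase.mpr ⟨hji.symm, him⟩) (sub_self (zs i))]
        ring
  have hABeq : A = B :=
    Polynomial.eq_of_degrees_lt_of_eval_index_eq (Finset.Icc 0 m) hvinj hdegA hdegB heval
  have hz := congrArg (Polynomial.eval z) hABeq
  rw [hA, hB] at hz
  simp only [Polynomial.eval_finset_sum, Polynomial.eval_mul, Polynomial.eval_sub,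
    Polynomial.eval_one, Polynomial.eval_C, Polynomial.eval_X, Polynomial.eval_prod] at hz
  calc (∑ j ∈ s, (∏ k ∈ s.erase j, (z - zs k)) /
          ((w - zs j) * ∏ k ∈ s.erase j, (zs j - zs k))) * (w - z)
      = ∑ j ∈ s, (d j)⁻¹ * ((w - z) * ∏ k ∈ s.erase j, (z - zs k)) := by
        rw [Finset.sum_mul]
        refine Finset.sum_congr rfl fun j _ => ?_
        have : ((w - zs j) * ∏ k ∈ s.erase j, (zs j - zs k)) = d j := by rw [hd]
        rw [← this, div_eq_mul_inv]
        ring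
    _ = 1 - (∏ k ∈ s, (w - zs k))⁻¹ * ∏ k ∈ s, (z - zs k) := hz
    _ = 1 - (∏ k ∈ s, (z - zs k)) / (∏ k ∈ s, (w - zs k)) := by
        rw [div_eq_mul_inv, mul_comm]

/-- For pairwise distinct `z_1,...,z_m` and `w` distinct from all `z_j`:
`∑_j ∏_{k≠j}(z - z_k) / [(w - z_j) ∏_{k≠j}(z_j - z_k)]
  = ∑_j ∏_{k=1}^{j-1}(z - z_k) / ∏_{k=1}^{j}(w - z_k)` for every `z`. -/
theorem partial_fraction_sum_eq (m : ℕ) (zs : ℕ → ℂ)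
    (hzs : Set.InjOn zs (Finset.Icc 1 m : Set ℕ)) (w : ℂ)
    (hw : ∀ j ∈ Finset.Icc 1 m, w ≠ zs j) (z : ℂ) :
    ∑ j ∈ Finset.Icc 1 m,
      (∏ k ∈ (Finset.Icc 1 m).erase j, (z - zs k)) /
        ((w - zs j) * ∏ k ∈ (Finset.Icc 1 m).erase j, (zs j - zs k)) =
    ∑ j ∈ Finset.Icc 1 m,
      (∏ k ∈ Finset.Icc 1 (j - 1), (z - zs k)) /
        ∏ k ∈ Finset.Icc 1 j, (w - zs k) := by
  set f : ℂ → ℂ := fun z => ∑ j ∈ Finset.Icc 1 m,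
      (∏ k ∈ (Finset.Icc 1 m).erase j, (z - zs k)) /
        ((w - zs j) * ∏ k ∈ (Finset.Icc 1 m).erase j, (zs j - zs k)) with hf
  set g : ℂ → ℂ := fun z => ∑ j ∈ Finset.Icc 1 m,
      (∏ k ∈ Finset.Icc 1 (j - 1), (z - zs k)) /
        ∏ k ∈ Finset.Icc 1 j, (w - zs k) with hg
  have key : ∀ z : ℂ, z ≠ w → f z = g z := by
    intro z hz
    have hwz : w - z ≠ 0 := sub_ne_zero_of_ne (Ne.symm hz)
    apply mul_right_cancel₀ hwz
    rw [hf, hg]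
    simp only
    rw [lhs_mul m zs hzs w hw z, rhs_mul m zs w hw z]
  have hfc : Continuous f := by
    apply continuous_finset_sum
    intro j _
    exact (continuous_finset_prod _ fun k _ => continuous_id.sub continuous_const).div_const _
  have hgc : Continuous g := by
    apply continuous_finset_sum
    intro j _
    exact (continuous_finset_prod _ fun k _ => continuous_id.sub continuous_const).div_const _
  have : f = g := by
    apply Continuous.ext_on (dense_compl_singleton w) hfc hgc
    intro z hz
    exact key z hz
  exact congrFun this z
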